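/- Let (g_{l,k} : l ≥ 1, 0 ≤ k < 2^l) be independent standard normal random variables, and let (w_l)_{l ≥ 1} be admissible. Then almost surely w_l^{-1} · max_{0 ≤ k < 2^l} |g_{l,k}| → 0 as l → ∞; that is, the Gaussian white noise array almost surely belongs to the multiscale space M₀(w). -/

import Mathlib

open MeasureTheory ProbabilityTheory Filter
open Real ENNReal

/-- The maximum `max_{0 ≤ k < 2^l} |g l k ω|` over the `2^l` coordinates at level `l`. -/
noncomputable def levelMax {Ω : Type*} (g : ℕ → ℕ → Ω → ℝ) (l : ℕ) (ω : Ω) : ℝ :=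
  (Finset.range (2 ^ l)).sup' (Finset.nonempty_range_iff.mpr (by positivity))
    (fun k => |g l k ω|)

lemma pointwise_pdf_eq (t x : ℝ) :
    Real.exp (t * x - t ^ 2) * gaussianPDFReal 0 1 x
      = Real.exp (-t ^ 2 / 2) * gaussianPDFReal t 1 x := by
  simp only [gaussianPDFReal, NNReal.coe_one, mul_one, sub_zero]
  have h : t * x - t ^ 2 + -x ^ 2 / 2 = -t ^ 2 / 2 + -(x - t) ^ 2 / 2 := by ring
  calc Real.exp (t * x - t ^ 2) * ((√(2 * π))⁻¹ * Real.exp (-x ^ 2 / 2))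
      = (√(2 * π))⁻¹ * Real.exp (t * x - t ^ 2 + -x ^ 2 / 2) := by
        rw [Real.exp_add]; ring
    _ = (√(2 * π))⁻¹ * Real.exp (-t ^ 2 / 2 + -(x - t) ^ 2 / 2) := by rw [h]
    _ = Real.exp (-t ^ 2 / 2) * ((√(2 * π))⁻¹ * Real.exp (-(x - t) ^ 2 / 2)) := by
        rw [Real.exp_add]; ring

lemma gauss_tail_one_sided {t : ℝ} (ht : 0 ≤ t) :
    gaussianReal 0 1 (Set.Ici t) ≤ ENNReal.ofReal (Real.exp (-t ^ 2 / 2)) := by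
  rw [gaussianReal_of_var_ne_zero 0 one_ne_zero,
    withDensity_apply _ measurableSet_Ici]
  have hmeas : Measurable fun x : ℝ =>
      ENNReal.ofReal (Real.exp (t * x - t ^ 2) * gaussianPDFReal 0 1 x) := by
    apply Measurable.ennreal_ofReal
    exact (((measurable_id.const_mul t).sub measurable_const).exp).mul
      (measurable_gaussianPDFReal 0 1)
  calc ∫⁻ x in Set.Ici t, gaussianPDF 0 1 x
      ≤ ∫⁻ x in Set.Ici t,
          ENNReal.ofReal (Real.exp (t * x - t ^ 2) * gaussianPDFReal 0 1 x) := by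
        refine setLIntegral_mono hmeas fun x hx => ?_
        rw [gaussianPDF]
        refine ENNReal.ofReal_le_ofReal ?_
        refine le_mul_of_one_le_left (gaussianPDFReal_nonneg 0 1 x) ?_
        rw [← Real.exp_zero]
        apply Real.exp_le_exp.2
        nlinarith [Set.mem_Ici.mp hx]
    _ ≤ ∫⁻ x, ENNReal.ofReal (Real.exp (t * x - t ^ 2) * gaussianPDFReal 0 1 x) :=
        setLIntegral_le_lintegral _ _
    _ = ∫⁻ x, ENNReal.ofReal (Real.exp (-t ^ 2 / 2) * gaussianPDFReal t 1 x) := by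
        simp_rw [pointwise_pdf_eq]
    _ = ENNReal.ofReal (Real.exp (-t ^ 2 / 2))
          * ∫⁻ x, ENNReal.ofReal (gaussianPDFReal t 1 x) := by
        simp_rw [ENNReal.ofReal_mul (Real.exp_nonneg _)]
        rw [lintegral_const_mul _ ((measurable_gaussianPDFReal t 1).ennreal_ofReal)]
    _ = ENNReal.ofReal (Real.exp (-t ^ 2 / 2)) := by
        rw [lintegral_gaussianPDFReal_eq_one t one_ne_zero, mul_one]

lemma gauss_tail_abs {t : ℝ} (ht : 0 ≤ t) :
    gaussianReal 0 1 {x | t ≤ |x|} ≤ ENNReal.ofReal (2 * Real.exp (-t ^ 2 / 2)) := by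
  have hsub : {x : ℝ | t ≤ |x|} ⊆ Set.Ici t ∪ Set.Iic (-t) := by
    intro x hx
    rcases abs_cases x with ⟨h1, _⟩ | ⟨h1, _⟩
    · exact Or.inl (by simpa [h1] using hx.out)
    · refine Or.inr ?_
      have := hx.out
      rw [h1] at this
      simp only [Set.mem_Iic]
      linarith
  have hneg : gaussianReal 0 1 (Set.Iic (-t)) = gaussianReal 0 1 (Set.Ici t) := by
    have hmap : (gaussianReal 0 1).map ((-1 : ℝ) * ·) = gaussianReal 0 1 := by
      rw [gaussianReal_map_const_mul]
      norm_num
    conv_lhs => rw [← hmap]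
    rw [Measure.map_apply (measurable_id'.const_mul (-1)) measurableSet_Iic]
    congr 1
    ext x
    simp only [Set.mem_preimage, Set.mem_Iic, Set.mem_Ici]
    constructor <;> intro h <;> linarith
  calc gaussianReal 0 1 {x | t ≤ |x|} ≤ gaussianReal 0 1 (Set.Ici t ∪ Set.Iic (-t)) :=
        measure_mono hsub
    _ ≤ gaussianReal 0 1 (Set.Ici t) + gaussianReal 0 1 (Set.Iic (-t)) :=
        measure_union_le _ _
    _ ≤ ENNReal.ofReal (Real.exp (-t ^ 2 / 2)) + ENNReal.ofReal (Real.exp (-t ^ 2 / 2)) := by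
        rw [hneg]
        exact add_le_add (gauss_tail_one_sided ht) (gauss_tail_one_sided ht)
    _ = ENNReal.ofReal (2 * Real.exp (-t ^ 2 / 2)) := by
        rw [two_mul, ENNReal.ofReal_add (Real.exp_nonneg _) (Real.exp_nonneg _)]

lemma whiteNoise_aux
    {Ω : Type*} [MeasurableSpace Ω] (P : Measure Ω) [IsProbabilityMeasure P]
    (w : ℕ → ℝ) (hw1 : ∀ l, 1 ≤ w l)
    (hwinf : Tendsto (fun l : ℕ => w l / Real.sqrt l) atTop atTop)
    (g : ℕ → ℕ → Ω → ℝ)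
    (hmeas : ∀ l k, Measurable (g l k))
    (hgauss : ∀ l k, 1 ≤ l → k < 2 ^ l → Measure.map (g l k) P = gaussianReal 0 1)
    {ε : ℝ} (hε : 0 < ε) :
    ∀ᵐ ω ∂P, ∀ᶠ l in atTop, levelMax g l ω < ε * w l := by
  obtain ⟨N, hN⟩ := (hwinf.eventually_ge_atTop (2 / ε)).exists_forall_of_atTop
  set M := max N 1 with hM
  set s : ℕ → Set Ω := fun j => {ω | ε * w (j + M) ≤ levelMax g (j + M) ω} with hs
  set r : ℝ := 2 * Real.exp (-2) with hr
  have hr0 : 0 ≤ r := by positivity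
  have hr1 : r < 1 := by
    have h3 : (3 : ℝ) ≤ Real.exp 2 := by
      have := Real.add_one_le_exp (2 : ℝ); linarith
    rw [hr, Real.exp_neg, mul_comm, ← lt_div_iff₀ (by norm_num : (0:ℝ) < 2),
      inv_lt_comm₀ (Real.exp_pos 2) (by norm_num)]
    linarith
  -- bound on each event
  have hbound : ∀ j : ℕ, P (s j) ≤ ENNReal.ofReal (2 * r ^ (j + M)) := by
    intro j
    set l := j + M with hl
    have hl1 : 1 ≤ l := le_trans (le_max_right N 1) (Nat.le_add_left M j)
    have hlN : N ≤ l := le_trans (le_max_left N 1) (Nat.le_add_left M j)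
    have hsqrt : (0:ℝ) < Real.sqrt l := Real.sqrt_pos.mpr (by exact_mod_cast hl1)
    have hwl : 2 / ε ≤ w l / Real.sqrt l := hN l hlN
    have hwk : 2 * Real.sqrt l ≤ ε * w l := by
      rw [div_le_div_iff₀ hε hsqrt] at hwl
      linarith [hwl]
    have ht0 : (0:ℝ) ≤ ε * w l := le_trans (by positivity) hwk
    -- event is a finite union
    have hunion : s j = ⋃ k ∈ Finset.range (2 ^ l), {ω | ε * w l ≤ |g l k ω|} := by
      ext ω
      simp only [hs, Set.mem_setOf_eq, levelMax, Finset.le_sup'_iff, Set.mem_iUnion,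
        exists_prop, Finset.mem_range]
      exact Iff.rfl
    -- single tail
    have hsingle : ∀ k ∈ Finset.range (2 ^ l),
        P {ω | ε * w l ≤ |g l k ω|} ≤ ENNReal.ofReal (2 * Real.exp (-(ε * w l) ^ 2 / 2)) := by
      intro k hk
      have hset : MeasurableSet {x : ℝ | ε * w l ≤ |x|} :=
        measurableSet_le measurable_const measurable_id.abs
      have : P {ω | ε * w l ≤ |g l k ω|} = gaussianReal 0 1 {x | ε * w l ≤ |x|} := by
        rw [← hgauss l k hl1 (Finset.mem_range.mp hk),
          Measure.map_apply (hmeas l k) hset]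
        rfl
      rw [this]
      exact gauss_tail_abs ht0
    -- exponential bound
    have hexp : Real.exp (-(ε * w l) ^ 2 / 2) ≤ Real.exp (-2 * l) := by
      apply Real.exp_le_exp.2
      have h4 : (4:ℝ) * l ≤ (ε * w l) ^ 2 := by
        have := Real.sq_sqrt (Nat.cast_nonneg l : (0:ℝ) ≤ l)
        nlinarith [hwk, hsqrt.le]
      linarith
    calc P (s j) ≤ ∑ k ∈ Finset.range (2 ^ l), P {ω | ε * w l ≤ |g l k ω|} := by
          rw [hunion]; exact measure_biUnion_finset_le _ _
      _ ≤ ∑ _k ∈ Finset.range (2 ^ l),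
            ENNReal.ofReal (2 * Real.exp (-(ε * w l) ^ 2 / 2)) :=
          Finset.sum_le_sum hsingle
      _ = (2 ^ l : ℕ) * ENNReal.ofReal (2 * Real.exp (-(ε * w l) ^ 2 / 2)) := by
          rw [Finset.sum_const, Finset.card_range, nsmul_eq_mul]
      _ = ENNReal.ofReal ((2:ℝ) ^ l * (2 * Real.exp (-(ε * w l) ^ 2 / 2))) := by
          rw [ENNReal.ofReal_mul (by positivity : (0:ℝ) ≤ (2:ℝ) ^ l)]
          congr 1
          rw [← ENNReal.ofReal_natCast (2 ^ l)]
          congr 1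
          push_cast
          ring
      _ ≤ ENNReal.ofReal ((2:ℝ) ^ l * (2 * Real.exp (-2 * l))) := by
          apply ENNReal.ofReal_le_ofReal
          gcongr
      _ = ENNReal.ofReal (2 * r ^ l) := by
          congr 1
          rw [hr, mul_pow, ← Real.exp_nat_mul]
          push_cast
          ring_nf
  -- summability
  have hsum : Summable (fun j : ℕ => 2 * r ^ (j + M)) := by
    simp_rw [pow_add]
    exact (((summable_geometric_of_lt_one hr0 hr1).mul_right _).mul_left 2)
  have htsum : (∑' j, P (s j)) ≠ ∞ := by
    refine ne_top_of_le_ne_top ?_ (ENNReal.tsum_le_tsum hbound)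
    rw [← ENNReal.ofReal_tsum_of_nonneg (fun j => by positivity) hsum]
    exact ENNReal.ofReal_ne_top
  filter_upwards [ae_eventually_notMem htsum] with ω hω
  obtain ⟨L, hL⟩ := eventually_atTop.mp hω
  rw [eventually_atTop]
  refine ⟨L + M, fun l hl => ?_⟩
  have h1 : L ≤ l - M := by omega
  have h2 : (l - M) + M = l := by omega
  have := hL (l - M) h1
  rw [hs] at this
  simp only [Set.mem_setOf_eq, h2] at this
  linarith [not_le.mp this]

/-- For an admissible weight sequence `(w l)` (i.e. `w l ≥ 1`,
`l ↦ w l / √l` nondecreasing on `l ≥ 1` and tending to infinity) and jointly independent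
standard normals `(g l k : l ≥ 1, 0 ≤ k < 2^l)`, almost surely
`w_l⁻¹ · max_{0 ≤ k < 2^l} |g l k| → 0` as `l → ∞`; i.e. the white noise array a.s.
belongs to the multiscale space `M₀(w)`. -/
theorem whiteNoise_mem_M0_of_admissible
    {Ω : Type*} [MeasurableSpace Ω] (P : Measure Ω) [IsProbabilityMeasure P]
    (w : ℕ → ℝ) (hw1 : ∀ l, 1 ≤ w l)
    (hwmono : ∀ l m : ℕ, 1 ≤ l → l ≤ m → w l / Real.sqrt l ≤ w m / Real.sqrt m)
    (hwinf : Tendsto (fun l : ℕ => w l / Real.sqrt l) atTop atTop)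
    (g : ℕ → ℕ → Ω → ℝ)
    (hmeas : ∀ l k, Measurable (g l k))
    (hgauss : ∀ l k, 1 ≤ l → k < 2 ^ l → Measure.map (g l k) P = gaussianReal 0 1)
    (hindep : iIndepFun
      (fun p : {q : ℕ × ℕ // 1 ≤ q.1 ∧ q.2 < 2 ^ q.1} => g p.1.1 p.1.2) P) :
    ∀ᵐ ω ∂P, Tendsto (fun l : ℕ => levelMax g l ω / w l) atTop (nhds 0) := by
  have key : ∀ᵐ ω ∂P, ∀ n : ℕ,
      ∀ᶠ l in atTop, levelMax g l ω < (1 / ((n : ℝ) + 1)) * w l := by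
    rw [ae_all_iff]
    intro n
    exact whiteNoise_aux P w hw1 hwinf g hmeas hgauss (by positivity)
  filter_upwards [key] with ω hω
  have hwpos : ∀ l, (0:ℝ) < w l := fun l => zero_lt_one.trans_le (hw1 l)
  have h0 : ∀ l, 0 ≤ levelMax g l ω := by
    intro l
    refine le_trans (abs_nonneg (g l 0 ω)) ?_
    exact Finset.le_sup' (fun k => |g l k ω|) (Finset.mem_range.mpr (Nat.two_pow_pos l))
  rw [Metric.tendsto_atTop]
  intro ε hε
  obtain ⟨n, hn⟩ := exists_nat_one_div_lt hε
  obtain ⟨L, hL⟩ := eventually_atTop.mp (hω n)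
  refine ⟨L, fun l hl => ?_⟩
  rw [Real.dist_eq, sub_zero, abs_of_nonneg (div_nonneg (h0 l) (hwpos l).le)]
  have := hL l hl
  calc levelMax g l ω / w l < 1 / ((n : ℝ) + 1) := by
        rw [div_lt_iff₀ (hwpos l)]
        linarith [this]
    _ < ε := hn
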